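/- arXiv:1811.12655 — 6 statements merged into one kernel-verified Lean document; each statement's English description precedes it below -/
import Mathlib

section
/- Let R_i denote the largest index k with i ≤ k ≤ m that minimizes Avg(i,k) over k ∈ {i, ..., m}. Then the intervals [1,R_1], ..., [m,R_m] do not partially intersect: for all indices i, j with 1 ≤ i < j ≤ m, if j ≤ R_i then R_j ≤ R_i. -/
/-- Virtual cost of the uniform distribution over `{c 1, …, c m}`:
`ψ i = i·c i − (i−1)·c (i−1)`. -/
noncomputable def vc (c : ℕ → ℝ) (i : ℕ) : ℝ :=
  (i : ℝ) * c i - ((i : ℝ) - 1) * c (i - 1)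

/-- `Avg(i,k) = (1/(k−i+1))·Σ_{j=i}^{k} ψ_j`. -/
noncomputable def avg (c : ℕ → ℝ) (i k : ℕ) : ℝ :=
  (∑ j ∈ Finset.Icc i k, vc c j) / ((k : ℝ) - (i : ℝ) + 1)

set_option maxHeartbeats 1000000 in
/-- the intervals `[i, R i]` do not partially intersect. -/
theorem stmt0 (m : ℕ) (hm : 1 ≤ m) (c : ℕ → ℝ) (hc0 : c 0 = 0)
    (hmono : ∀ i j, i ≤ j → j ≤ m → c i ≤ c j)
    (R : ℕ → ℕ)
    (hRmem : ∀ i, 1 ≤ i → i ≤ m → i ≤ R i ∧ R i ≤ m)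
    (hRmin : ∀ i, 1 ≤ i → i ≤ m → ∀ k, i ≤ k → k ≤ m → avg c i (R i) ≤ avg c i k)
    (hRmax : ∀ i, 1 ≤ i → i ≤ m → ∀ k, i ≤ k → k ≤ m → avg c i k = avg c i (R i) → k ≤ R i)
    (i j : ℕ) (hi : 1 ≤ i) (hij : i < j) (hjm : j ≤ m) (hjR : j ≤ R i) :
    R j ≤ R i := by
  by_contra hcon
  push_neg at hcon
  have him : i ≤ m := by omega
  obtain ⟨hiRi, hRim⟩ := hRmem i hi him
  obtain ⟨hjRj, hRjm⟩ := hRmem j (by omega) hjm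
  set r := R i with hr
  set s := R j with hs
  have hrs : r < s := hcon
  have hle1 : avg c i r ≤ avg c i s := hRmin i hi him s (by omega) hRjm
  have h1 : avg c i r < avg c i s := by
    rcases lt_or_eq_of_le hle1 with h | h
    · exact h
    · exact absurd (hRmax i hi him s (by omega) hRjm h.symm) (by omega)
  have h2 : avg c i r ≤ avg c i (j - 1) := hRmin i hi him (j - 1) (by omega) (by omega)
  have h3 : avg c j s ≤ avg c j r := hRmin j (by omega) hjm r hjR (by omega)
  have hset : ∀ a b : ℕ, 1 ≤ a → Finset.Icc a b = Finset.Ioc (a - 1) b := by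
    intro a b ha
    rw [← Finset.Icc_add_one_left_eq_Ioc]
    congr 1
    omega
  simp only [avg] at h1 h2 h3
  rw [hset i r hi, hset i s hi] at h1
  rw [hset i r hi, hset i (j - 1) hi] at h2
  rw [hset j s (by omega), hset j r (by omega)] at h3
  set X := ∑ t ∈ Finset.Ioc (i - 1) r, vc c t with hX
  set Y := ∑ t ∈ Finset.Ioc (j - 1) r, vc c t with hY
  set Z := ∑ t ∈ Finset.Ioc r s, vc c t with hZ
  have s1 : (∑ t ∈ Finset.Ioc (i - 1) (j - 1), vc c t) + Y = X :=
    Finset.sum_Ioc_consecutive _ (by omega) (by omega)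
  have s2 : X + Z = ∑ t ∈ Finset.Ioc (i - 1) s, vc c t :=
    Finset.sum_Ioc_consecutive _ (by omega) (by omega)
  have s3 : Y + Z = ∑ t ∈ Finset.Ioc (j - 1) s, vc c t :=
    Finset.sum_Ioc_consecutive _ (by omega) (by omega)
  rw [← s2] at h1
  rw [← s1] at h2
  rw [← s3] at h3
  -- real casts
  have hir : (i : ℝ) ≤ r := by exact_mod_cast (by omega : i ≤ r)
  have hjs : (j : ℝ) ≤ s := by exact_mod_cast (by omega : j ≤ s)
  have hjr : (j : ℝ) ≤ r := by exact_mod_cast hjR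
  have hrsR : (r : ℝ) < s := by exact_mod_cast hrs
  have hijR : (i : ℝ) < j := by exact_mod_cast hij
  have hj1 : ((j - 1 : ℕ) : ℝ) = (j : ℝ) - 1 := by
    push_cast [Nat.cast_sub (by omega : 1 ≤ j)]; ring
  rw [hj1] at h2
  have d1 : (0:ℝ) < (r : ℝ) - i + 1 := by linarith
  have d2 : (0:ℝ) < (s : ℝ) - i + 1 := by linarith
  have d3 : (0:ℝ) < (j : ℝ) - 1 - i + 1 := by linarith
  have d4 : (0:ℝ) < (s : ℝ) - j + 1 := by linarith
  have d5 : (0:ℝ) < (r : ℝ) - j + 1 := by linarith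
  rw [div_lt_div_iff₀ d1 d2] at h1
  rw [div_le_div_iff₀ d1 d3] at h2
  rw [div_le_div_iff₀ d4 d5] at h3
  have e2 : ∑ t ∈ Finset.Ioc (i - 1) (j - 1), vc c t = X - Y := by linarith [s1]
  rw [e2] at h2
  clear_value X Y Z
  clear hRmin hRmax hRmem hmono hc0 s1 s2 s3 hle1
  -- derive the three simplified inequalities
  have m1 : X * ((s : ℝ) - r) < Z * ((r : ℝ) - i + 1) := by nlinarith [h1]
  have m2 : Y * ((r : ℝ) - i + 1) ≤ X * ((r : ℝ) - j + 1) := by nlinarith [h2]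
  have m3 : Z * ((r : ℝ) - j + 1) ≤ Y * ((s : ℝ) - r) := by nlinarith [h3]
  nlinarith [mul_lt_mul_of_pos_right m1 d5, mul_le_mul_of_nonneg_right m2 (le_of_lt (by linarith : (0:ℝ) < (s:ℝ) - r)), mul_le_mul_of_nonneg_right m3 (le_of_lt d1)]
end

section
/- Let R_i denote the largest index k with i ≤ k ≤ m that minimizes Avg(i,k) over k ∈ {i, ..., m}. Then for any indices i, j with 1 ≤ i ≤ j ≤ R_i, one has Avg(j, R_j) ≤ Avg(i, R_i); equivalently, ψ'_j ≤ ψ'_i for every j contained in the interval [i, R_i]. -/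
/-- for any `j` contained in `[i, R i]`, `Avg(j, R j) ≤ Avg(i, R i)`. -/
theorem stmt1 (m : ℕ) (hm : 1 ≤ m) (c : ℕ → ℝ) (hc0 : c 0 = 0)
    (hmono : ∀ i j, i ≤ j → j ≤ m → c i ≤ c j)
    (R : ℕ → ℕ)
    (hRmem : ∀ i, 1 ≤ i → i ≤ m → i ≤ R i ∧ R i ≤ m)
    (hRmin : ∀ i, 1 ≤ i → i ≤ m → ∀ k, i ≤ k → k ≤ m → avg c i (R i) ≤ avg c i k)
    (hRmax : ∀ i, 1 ≤ i → i ≤ m → ∀ k, i ≤ k → k ≤ m → avg c i k = avg c i (R i) → k ≤ R i)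
    (i j : ℕ) (hi : 1 ≤ i) (him : i ≤ m) (hij : i ≤ j) (hjR : j ≤ R i) :
    avg c j (R j) ≤ avg c i (R i) := by
  obtain ⟨hiR, hRm⟩ := hRmem i hi him
  have hjm : j ≤ m := le_trans hjR hRm
  have hj1 : 1 ≤ j := le_trans hi hij
  -- first: avg c j (R i) ≤ avg c i (R i)
  have key : avg c j (R i) ≤ avg c i (R i) := by
    rcases eq_or_lt_of_le hij with h | h
    · rw [h]
    · -- i < j
      have h1 : avg c i (R i) ≤ avg c i (j - 1) :=
        hRmin i hi him (j - 1) (by omega) (by omega)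
      have hsplit : (∑ k ∈ Finset.Icc i (R i), vc c k) =
          (∑ k ∈ Finset.Icc i (j - 1), vc c k) + (∑ k ∈ Finset.Icc j (R i), vc c k) := by
        rw [← Finset.sum_union]
        · congr 1
          ext x
          simp only [Finset.mem_union, Finset.mem_Icc]
          omega
        · rw [Finset.disjoint_left]
          intro x hx hx'
          simp only [Finset.mem_Icc] at hx hx'
          omega
      set S1 := ∑ k ∈ Finset.Icc i (j - 1), vc c k with hS1
      set S2 := ∑ k ∈ Finset.Icc j (R i), vc c k with hS2
      have hcast : ((j - 1 : ℕ) : ℝ) = (j : ℝ) - 1 := by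
        rw [Nat.cast_sub hj1]; norm_num
      set a : ℝ := (j : ℝ) - (i : ℝ) with ha
      set b : ℝ := ((R i : ℕ) : ℝ) - (j : ℝ) + 1 with hb
      have hapos : 0 < a := by
        rw [ha]; have : (i : ℝ) < j := by exact_mod_cast h
        linarith
      have hbpos : 0 < b := by
        rw [hb]; have : (j : ℝ) ≤ (R i : ℝ) := by exact_mod_cast hjR
        linarith
      have e1 : avg c i (R i) = (S1 + S2) / (a + b) := by
        rw [avg, hsplit]; congr 1; ring
      have e2 : avg c i (j - 1) = S1 / a := by
        rw [avg, hcast]; congr 1; ring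
      have e3 : avg c j (R i) = S2 / b := by
        rw [avg]
      rw [e1, e2] at h1
      rw [e3, e1]
      rw [div_le_div_iff₀ (by linarith) hapos] at h1
      rw [div_le_div_iff₀ hbpos (by linarith)]
      nlinarith
  calc avg c j (R j) ≤ avg c j (R i) := hRmin j hj1 hjm (R i) hjR hRm
    _ ≤ avg c i (R i) := key
end

section
/- Let R_i denote the largest index k with i ≤ k ≤ m that minimizes Avg(i,k) over k ∈ {i, ..., m}. Fix an index i with 1 ≤ i ≤ m and suppose the interval [i, R_i] is not contained in any other such interval, i.e., R_j < i for every j < i. Then for every j < i one has Avg(j, R_j) < Avg(i, R_i), i.e., ψ'_j < ψ'_i. -/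
/-- if `[i, R i]` is maximal (not contained in any other interval),
then `Avg(j, R j) < Avg(i, R i)` for every `j < i`. -/
theorem stmt2 (m : ℕ) (hm : 1 ≤ m) (c : ℕ → ℝ) (hc0 : c 0 = 0)
    (hmono : ∀ i j, i ≤ j → j ≤ m → c i ≤ c j)
    (R : ℕ → ℕ)
    (hRmem : ∀ i, 1 ≤ i → i ≤ m → i ≤ R i ∧ R i ≤ m)
    (hRmin : ∀ i, 1 ≤ i → i ≤ m → ∀ k, i ≤ k → k ≤ m → avg c i (R i) ≤ avg c i k)
    (hRmax : ∀ i, 1 ≤ i → i ≤ m → ∀ k, i ≤ k → k ≤ m → avg c i k = avg c i (R i) → k ≤ R i)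
    (i : ℕ) (hi : 1 ≤ i) (him : i ≤ m)
    (hmax : ∀ j, 1 ≤ j → j < i → R j < i) :
    ∀ j, 1 ≤ j → j < i → avg c j (R j) < avg c i (R i) := by
  -- key step: hopping from an interval to the next one strictly increases the average
  have key : ∀ j, 1 ≤ j → j ≤ m → R j + 1 ≤ m →
      avg c j (R j) < avg c (R j + 1) (R (R j + 1)) := by
    intro j h1 hjm hR1
    obtain ⟨hjr, hrm⟩ := hRmem j h1 hjm
    obtain ⟨hj'r', hr'm⟩ := hRmem (R j + 1) (by omega) hR1
    set r := R j with hr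
    set r' := R (r + 1) with hr'
    have hlt : avg c j r < avg c j r' := by
      have hle := hRmin j h1 hjm r' (by omega) hr'm
      rcases lt_or_eq_of_le hle with h | h
      · exact h
      · exact absurd (hRmax j h1 hjm r' (by omega) hr'm h.symm) (by omega)
    have hsplit : ∑ x ∈ Finset.Icc j r', vc c x
        = ∑ x ∈ Finset.Icc j r, vc c x + ∑ x ∈ Finset.Icc (r + 1) r', vc c x := by
      have he : Finset.Icc j r' = Finset.Icc j r ∪ Finset.Icc (r + 1) r' := by
        ext x; simp only [Finset.mem_Icc, Finset.mem_union]; omega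
      rw [he, Finset.sum_union]
      rw [Finset.disjoint_left]
      intro a ha hb
      simp only [Finset.mem_Icc] at ha hb
      omega
    set S1 := ∑ x ∈ Finset.Icc j r, vc c x with hS1
    set S2 := ∑ x ∈ Finset.Icc (r + 1) r', vc c x with hS2
    unfold avg at hlt ⊢
    rw [hsplit] at hlt
    have hjr' : (j : ℝ) ≤ (r : ℝ) := by exact_mod_cast hjr
    have hrr' : (r : ℝ) + 1 ≤ (r' : ℝ) := by exact_mod_cast hj'r'
    have hd1 : (0 : ℝ) < (r : ℝ) - (j : ℝ) + 1 := by linarith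
    have hd2 : (0 : ℝ) < (r' : ℝ) - ((r + 1 : ℕ) : ℝ) + 1 := by push_cast; linarith
    have hD : (0 : ℝ) < (r' : ℝ) - (j : ℝ) + 1 := by linarith
    rw [div_lt_div_iff₀ hd1 hD] at hlt
    rw [div_lt_div_iff₀ hd1 hd2]
    push_cast at hlt ⊢
    nlinarith
  -- main induction on i - j
  have main : ∀ d j, i - j ≤ d → 1 ≤ j → j < i → avg c j (R j) < avg c i (R i) := by
    intro d
    induction d with
    | zero => intro j hle h1 h2; omega
    | succ d ih =>
      intro j hle h1 h2
      have hjm : j ≤ m := by omega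
      have hRji := hmax j h1 h2
      have hjr := (hRmem j h1 hjm).1
      have hk := key j h1 hjm (by omega)
      rcases eq_or_lt_of_le (show R j + 1 ≤ i by omega) with he | hlt
      · rwa [he] at hk
      · exact lt_trans hk (ih (R j + 1) (by omega) (by omega) hlt)
  intro j h1 h2
  exact main (i - j) j le_rfl h1 h2
end

section
/- For any index i with 1 ≤ i ≤ m, let I_i = {j ∈ {1, ..., m} : φ_j = φ_i} be the level set of the regularized virtual cost containing i. Then Σ_{j ∈ I_i} φ_j = Σ_{j ∈ I_i} ψ_j; i.e., on each level set of φ, the sum of the regularized virtual costs equals the sum of the virtual costs. -/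
open scoped Classical

/-- `ψ'_i = min_{i ≤ k ≤ m} Avg(i,k)`. -/
noncomputable def rvcAux (m : ℕ) (c : ℕ → ℝ) (i : ℕ) : ℝ :=
  sInf {x | ∃ k, i ≤ k ∧ k ≤ m ∧ x = avg c i k}

/-- Regularized virtual cost: `φ_i = max_{1 ≤ j ≤ i} ψ'_j`. -/
noncomputable def rvc (m : ℕ) (c : ℕ → ℝ) (i : ℕ) : ℝ :=
  sSup {x | ∃ j, 1 ≤ j ∧ j ≤ i ∧ x = rvcAux m c j}

lemma setA_finite (m : ℕ) (c : ℕ → ℝ) (i : ℕ) :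
    {x | ∃ k, i ≤ k ∧ k ≤ m ∧ x = avg c i k}.Finite :=
  ((Set.finite_Icc i m).image (avg c i)).subset (by
    rintro x ⟨k, h1, h2, rfl⟩; exact ⟨k, ⟨h1, h2⟩, rfl⟩)

lemma rvcAux_le (m : ℕ) (c : ℕ → ℝ) {i k : ℕ} (hik : i ≤ k) (hkm : k ≤ m) :
    rvcAux m c i ≤ avg c i k :=
  csInf_le (setA_finite m c i).bddBelow ⟨k, hik, hkm, rfl⟩

lemma rvcAux_attained (m : ℕ) (c : ℕ → ℝ) {i : ℕ} (him : i ≤ m) :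
    ∃ k, i ≤ k ∧ k ≤ m ∧ rvcAux m c i = avg c i k := by
  have hne : Set.Nonempty {x | ∃ k, i ≤ k ∧ k ≤ m ∧ x = avg c i k} :=
    ⟨avg c i i, i, le_rfl, him, rfl⟩
  exact hne.csInf_mem (setA_finite m c i)

lemma setB_finite (m : ℕ) (c : ℕ → ℝ) (i : ℕ) :
    {x | ∃ j, 1 ≤ j ∧ j ≤ i ∧ x = rvcAux m c j}.Finite :=
  ((Set.finite_Icc 1 i).image (rvcAux m c)).subset (by
    rintro x ⟨j, h1, h2, rfl⟩; exact ⟨j, ⟨h1, h2⟩, rfl⟩)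

lemma le_rvc (m : ℕ) (c : ℕ → ℝ) {j i : ℕ} (hj : 1 ≤ j) (hji : j ≤ i) :
    rvcAux m c j ≤ rvc m c i :=
  le_csSup (setB_finite m c i).bddAbove ⟨j, hj, hji, rfl⟩

lemma rvc_attained (m : ℕ) (c : ℕ → ℝ) {i : ℕ} (hi : 1 ≤ i) :
    ∃ j, 1 ≤ j ∧ j ≤ i ∧ rvc m c i = rvcAux m c j := by
  have hne : Set.Nonempty {x | ∃ j, 1 ≤ j ∧ j ≤ i ∧ x = rvcAux m c j} :=
    ⟨rvcAux m c 1, 1, le_rfl, hi, rfl⟩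
  exact hne.csSup_mem (setB_finite m c i)

lemma rvc_mono (m : ℕ) (c : ℕ → ℝ) {i i' : ℕ} (hi : 1 ≤ i) (h : i ≤ i') :
    rvc m c i ≤ rvc m c i' := by
  have hne : Set.Nonempty {x | ∃ j, 1 ≤ j ∧ j ≤ i ∧ x = rvcAux m c j} :=
    ⟨rvcAux m c 1, 1, le_rfl, hi, rfl⟩
  apply csSup_le_csSup (setB_finite m c i').bddAbove hne
  rintro x ⟨j, h1, h2, rfl⟩
  exact ⟨j, h1, h2.trans h, rfl⟩

lemma rvc_eq_rvcAux (m : ℕ) (c : ℕ → ℝ) {i : ℕ} (hi : 1 ≤ i)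
    (h : i = 1 ∨ rvc m c (i - 1) < rvc m c i) : rvc m c i = rvcAux m c i := by
  obtain ⟨j, hj1, hji, hje⟩ := rvc_attained m c hi
  rcases eq_or_lt_of_le hji with rfl | hlt
  · exact hje
  · exfalso
    rcases h with rfl | h
    · omega
    · have h2 : rvcAux m c j ≤ rvc m c (i - 1) := le_rvc m c hj1 (by omega)
      rw [← hje] at h2
      linarith

lemma sum_Icc_split (f : ℕ → ℝ) {i k K : ℕ} (h1 : i ≤ k + 1) (h2 : k ≤ K) :
    ∑ j ∈ Finset.Icc i K, f j
      = ∑ j ∈ Finset.Icc i k, f j + ∑ j ∈ Finset.Icc (k + 1) K, f j := by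
  rw [← Finset.sum_union]
  · congr 1
    ext x
    simp only [Finset.mem_union, Finset.mem_Icc]
    omega
  · rw [Finset.disjoint_left]
    intro x hx hx'
    simp only [Finset.mem_Icc] at hx hx'
    omega

/-- on each level set of `φ`, the sum of regularized virtual
costs equals the sum of virtual costs. -/
theorem stmt3 (m : ℕ) (hm : 1 ≤ m) (c : ℕ → ℝ) (hc0 : c 0 = 0)
    (hmono : ∀ i j, i ≤ j → j ≤ m → c i ≤ c j)
    (i : ℕ) (hi : 1 ≤ i) (him : i ≤ m) :
    ∑ j ∈ (Finset.Icc 1 m).filter (fun j => rvc m c j = rvc m c i), rvc m c j =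
      ∑ j ∈ (Finset.Icc 1 m).filter (fun j => rvc m c j = rvc m c i), vc c j := by
  classical
  set v := rvc m c i with hv
  set T := (Finset.Icc 1 m).filter (fun j => rvc m c j = v) with hTdef
  have hTmem : ∀ j, j ∈ T ↔ (1 ≤ j ∧ j ≤ m ∧ rvc m c j = v) := by
    intro j
    simp [hTdef, Finset.mem_filter, Finset.mem_Icc, and_assoc]
  have hiT : i ∈ T := (hTmem i).2 ⟨hi, him, rfl⟩
  have hTne : T.Nonempty := ⟨i, hiT⟩
  set a := T.min' hTne with ha
  set b := T.max' hTne with hb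
  have haT := T.min'_mem hTne
  have hbT := T.max'_mem hTne
  rw [hTmem] at haT hbT
  obtain ⟨ha1, ham, hav⟩ := haT
  obtain ⟨hb1, hbm, hbv⟩ := hbT
  have habLe : a ≤ b := T.min'_le b (T.max'_mem hTne)
  -- the level set is the interval [a, b]
  have hTI : T = Finset.Icc a b := by
    ext j
    simp only [Finset.mem_Icc]
    constructor
    · intro hj
      exact ⟨T.min'_le j hj, T.le_max' j hj⟩
    · rintro ⟨h1, h2⟩
      refine (hTmem j).2 ⟨ha1.trans h1, h2.trans hbm, le_antisymm ?_ ?_⟩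
      · rw [← hbv]; exact rvc_mono m c (ha1.trans h1) h2
      · rw [← hav]; exact rvc_mono m c ha1 h1
  -- φ a = ψ' a
  have haux : rvcAux m c a = v := by
    rw [← hav]
    have : rvc m c a = rvcAux m c a := by
      apply rvc_eq_rvcAux m c ha1
      rcases eq_or_lt_of_le ha1 with h1 | h1
      · exact Or.inl h1.symm
      · refine Or.inr (lt_of_le_of_ne (rvc_mono m c (by omega) (by omega)) ?_)
        intro hcon
        have : a - 1 ∈ T := (hTmem _).2 ⟨by omega, by omega, by rw [hcon, hav]⟩
        have := T.min'_le _ this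
        omega
    rw [this]
  -- truncated minimizers stay inside [j, b], giving the upper bound
  have key : ∀ n : ℕ, ∀ j, a ≤ j → j ≤ b → b - j = n →
      ∑ x ∈ Finset.Icc j b, vc c x ≤ ((b : ℝ) - j + 1) * v := by
    intro n
    induction n using Nat.strong_induction_on with
    | _ n IH =>
      intro j hja hjb hn
      have hj1 : 1 ≤ j := ha1.trans hja
      have hjm : j ≤ m := hjb.trans hbm
      have hjT : rvc m c j = v :=
        ((hTmem j).1 (hTI ▸ Finset.mem_Icc.2 ⟨hja, hjb⟩)).2.2
      have hψ'j : rvcAux m c j ≤ v := hjT ▸ le_rvc m c hj1 le_rfl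
      obtain ⟨k, hjk, hkm, hk⟩ := rvcAux_attained m c hjm
      have havk : avg c j k ≤ v := hk ▸ hψ'j
      have hposjk : (0 : ℝ) < (k : ℝ) - j + 1 := by
        have : (j : ℝ) ≤ k := Nat.cast_le.2 hjk
        linarith
      have hS1 : ∑ x ∈ Finset.Icc j k, vc c x ≤ v * ((k : ℝ) - j + 1) :=
        (div_le_iff₀ hposjk).1 havk
      rcases le_or_gt k b with hkb | hbk
      · rcases eq_or_lt_of_le hkb with rfl | hkb'
        · -- k = b
          nlinarith [hS1]
        · -- k < b: use induction on the tail [k+1, b]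
          have h2 : ∑ x ∈ Finset.Icc (k + 1) b, vc c x ≤ ((b : ℝ) - ((k + 1 : ℕ) : ℝ) + 1) * v :=
            IH (b - (k + 1)) (by omega) (k + 1) (by omega) (by omega) rfl
          push_cast at h2
          rw [sum_Icc_split (vc c) (by omega) hkb]
          have hr : ((k : ℝ) - j + 1) * v + ((b : ℝ) - (k + 1) + 1) * v
              = ((b : ℝ) - j + 1) * v := by push_cast; ring
          nlinarith [hS1, h2]
      · -- b < k ≤ m : contradiction-style bound via φ (b+1) > v
        have hbm' : b < m := lt_of_lt_of_le hbk hkm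
        have hvlt : v < rvc m c (b + 1) := by
          refine lt_of_le_of_ne ?_ ?_
          · rw [← hbv]; exact rvc_mono m c hb1 (by omega)
          · intro hcon
            have : b + 1 ∈ T := (hTmem _).2 ⟨by omega, by omega, hcon.symm⟩
            have := T.le_max' _ this
            omega
        have haux1 : rvc m c (b + 1) = rvcAux m c (b + 1) := by
          apply rvc_eq_rvcAux m c (by omega)
          exact Or.inr (by simpa using hbv ▸ hvlt)
        have hvlt2 : v < rvcAux m c (b + 1) := haux1 ▸ hvlt
        have hle2 : rvcAux m c (b + 1) ≤ avg c (b + 1) k := rvcAux_le m c hbk hkm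
        have hpos2 : (0 : ℝ) < (k : ℝ) - ((b + 1 : ℕ) : ℝ) + 1 := by
          have : ((b : ℝ) + 1) ≤ k := by exact_mod_cast hbk
          push_cast; linarith
        have h3 : v * ((k : ℝ) - (b + 1) + 1) < ∑ x ∈ Finset.Icc (b + 1) k, vc c x := by
          have h4 := lt_of_lt_of_le hvlt2 hle2
          rw [avg, lt_div_iff₀ hpos2] at h4
          push_cast at h4 ⊢
          linarith
        have hsplit : ∑ x ∈ Finset.Icc j k, vc c x
            = ∑ x ∈ Finset.Icc j b, vc c x + ∑ x ∈ Finset.Icc (b + 1) k, vc c x :=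
          sum_Icc_split (vc c) (by omega) (le_of_lt hbk)
        push_cast at h3
        nlinarith [hS1, h3, hsplit]
  -- lower bound: ψ' a ≤ avg a b
  have hlow : ((b : ℝ) - a + 1) * v ≤ ∑ x ∈ Finset.Icc a b, vc c x := by
    have h1 : v ≤ avg c a b := haux ▸ rvcAux_le m c habLe hbm
    have hpos : (0 : ℝ) < (b : ℝ) - a + 1 := by
      have : (a : ℝ) ≤ b := Nat.cast_le.2 habLe
      linarith
    rw [avg, le_div_iff₀ hpos] at h1
    linarith
  have hhigh := key (b - a) a le_rfl habLe rfl
  have hsumψ : ∑ x ∈ Finset.Icc a b, vc c x = ((b : ℝ) - a + 1) * v :=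
    le_antisymm hhigh hlow
  -- sum of φ over the level set is constant
  have hsumφ : ∑ j ∈ T, rvc m c j = ((b : ℝ) - a + 1) * v := by
    rw [hTI]
    rw [Finset.sum_congr rfl (fun j hj => ((hTmem j).1 (hTI ▸ hj)).2.2)]
    rw [Finset.sum_const, Nat.card_Icc, nsmul_eq_mul]
    congr 1
    have : a ≤ b + 1 := by omega
    push_cast [Nat.cast_sub this]
    ring
  calc ∑ j ∈ T, rvc m c j = ((b : ℝ) - a + 1) * v := hsumφ
    _ = ∑ x ∈ Finset.Icc a b, vc c x := hsumψ.symm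
    _ = ∑ j ∈ T, vc c j := by rw [hTI]
end

section
/- For every index i with 1 ≤ i ≤ m, the prefix sums satisfy Σ_{j=1}^{i} φ_j ≤ Σ_{j=1}^{i} ψ_j. Moreover, if i < m and φ_i ≠ φ_{i+1}, then equality holds: Σ_{j=1}^{i} φ_j = Σ_{j=1}^{i} ψ_j. -/
namespace Stmt4Aux

/-- Partial sums over `Ioc a b`. -/
noncomputable def SA (c : ℕ → ℝ) (a b : ℕ) : ℝ := ∑ j ∈ Finset.Ioc a b, vc c j

lemma SA_add (c : ℕ → ℝ) {a b d : ℕ} (hab : a ≤ b) (hbd : b ≤ d) :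
    SA c a b + SA c b d = SA c a d := Finset.sum_Ioc_consecutive _ hab hbd

lemma Icc_eq_Ioc {i k : ℕ} (hi : 1 ≤ i) :
    Finset.Icc i k = Finset.Ioc (i - 1) k := by
  ext x
  simp only [Finset.mem_Icc, Finset.mem_Ioc]
  omega

lemma avg_eq (c : ℕ → ℝ) {i : ℕ} (k : ℕ) (hi : 1 ≤ i) :
    avg c i k = SA c (i - 1) k / ((k : ℝ) - (i : ℝ) + 1) := by
  unfold avg SA
  rw [Icc_eq_Ioc hi]

lemma den_pos {i k : ℕ} (hik : i ≤ k) : (0 : ℝ) < (k : ℝ) - (i : ℝ) + 1 := by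
  have : (i : ℝ) ≤ (k : ℝ) := Nat.cast_le.2 hik
  linarith

lemma le_avg_iff (c : ℕ → ℝ) {i k : ℕ} (x : ℝ) (hi : 1 ≤ i) (hik : i ≤ k) :
    x ≤ avg c i k ↔ x * ((k : ℝ) - (i : ℝ) + 1) ≤ SA c (i - 1) k := by
  rw [avg_eq c k hi, le_div_iff₀ (den_pos hik)]

lemma avg_le_iff (c : ℕ → ℝ) {i k : ℕ} (x : ℝ) (hi : 1 ≤ i) (hik : i ≤ k) :
    avg c i k ≤ x ↔ SA c (i - 1) k ≤ x * ((k : ℝ) - (i : ℝ) + 1) := by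
  rw [avg_eq c k hi, div_le_iff₀ (den_pos hik)]

lemma avg_eq_imp (c : ℕ → ℝ) {i k : ℕ} {x : ℝ} (hi : 1 ≤ i) (hik : i ≤ k)
    (h : avg c i k = x) : SA c (i - 1) k = x * ((k : ℝ) - (i : ℝ) + 1) := by
  rw [avg_eq c k hi, div_eq_iff (ne_of_gt (den_pos hik))] at h
  exact h

lemma auxSet_finite (m : ℕ) (c : ℕ → ℝ) (i : ℕ) :
    {x | ∃ k, i ≤ k ∧ k ≤ m ∧ x = avg c i k}.Finite := by
  apply Set.Finite.subset ((Set.finite_Icc i m).image (avg c i))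
  rintro x ⟨k, h1, h2, rfl⟩
  exact ⟨k, ⟨h1, h2⟩, rfl⟩

lemma rvcAux_le (m : ℕ) (c : ℕ → ℝ) {i k : ℕ} (hik : i ≤ k) (hkm : k ≤ m) :
    rvcAux m c i ≤ avg c i k :=
  csInf_le (auxSet_finite m c i).bddBelow ⟨k, hik, hkm, rfl⟩

lemma rvcAux_mem (m : ℕ) (c : ℕ → ℝ) {i : ℕ} (him : i ≤ m) :
    ∃ k, i ≤ k ∧ k ≤ m ∧ rvcAux m c i = avg c i k := by
  have hne : {x | ∃ k, i ≤ k ∧ k ≤ m ∧ x = avg c i k}.Nonempty :=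
    ⟨avg c i i, i, le_refl i, him, rfl⟩
  exact hne.csInf_mem (auxSet_finite m c i)

lemma rvcSet_finite (m : ℕ) (c : ℕ → ℝ) (i : ℕ) :
    {x | ∃ j, 1 ≤ j ∧ j ≤ i ∧ x = rvcAux m c j}.Finite := by
  apply Set.Finite.subset ((Set.finite_Icc 1 i).image (rvcAux m c))
  rintro x ⟨j, h1, h2, rfl⟩
  exact ⟨j, ⟨h1, h2⟩, rfl⟩

lemma le_rvc (m : ℕ) (c : ℕ → ℝ) {j i : ℕ} (hj : 1 ≤ j) (hji : j ≤ i) :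
    rvcAux m c j ≤ rvc m c i :=
  le_csSup (rvcSet_finite m c i).bddAbove ⟨j, hj, hji, rfl⟩

lemma rvc_mem (m : ℕ) (c : ℕ → ℝ) {i : ℕ} (hi : 1 ≤ i) :
    ∃ j, 1 ≤ j ∧ j ≤ i ∧ rvc m c i = rvcAux m c j := by
  have hne : {x | ∃ j, 1 ≤ j ∧ j ≤ i ∧ x = rvcAux m c j}.Nonempty :=
    ⟨rvcAux m c 1, 1, le_refl 1, hi, rfl⟩
  exact hne.csSup_mem (rvcSet_finite m c i)

lemma rvc_mono (m : ℕ) (c : ℕ → ℝ) {a b : ℕ} (ha : 1 ≤ a) (hab : a ≤ b) :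
    rvc m c a ≤ rvc m c b := by
  have hne : ({x | ∃ j, 1 ≤ j ∧ j ≤ a ∧ x = rvcAux m c j} : Set ℝ).Nonempty :=
    ⟨rvcAux m c 1, 1, le_refl 1, ha, rfl⟩
  apply csSup_le_csSup (rvcSet_finite m c b).bddAbove hne
  rintro x ⟨j, h1, h2, rfl⟩
  exact ⟨j, h1, h2.trans hab, rfl⟩

lemma jump (m : ℕ) (c : ℕ → ℝ) {i : ℕ} (hi : 1 ≤ i)
    (h : rvc m c i < rvc m c (i + 1)) :
    rvc m c (i + 1) = rvcAux m c (i + 1) := by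
  obtain ⟨j, hj1, hj2, hje⟩ := rvc_mem m c (i := i + 1) (by omega)
  rcases Nat.lt_or_ge j (i + 1) with hlt | hge
  · exfalso
    have h2 : rvcAux m c j ≤ rvc m c i := le_rvc m c hj1 (by omega)
    rw [hje] at h
    linarith
  · have hj : j = i + 1 := by omega
    rw [hj] at hje
    exact hje

/-- Largest minimizer achieving `rvcAux`. -/
lemma exists_max_argmin (m : ℕ) (c : ℕ → ℝ) {j : ℕ} (hjm : j ≤ m) :
    ∃ k, j ≤ k ∧ k ≤ m ∧ avg c j k = rvcAux m c j ∧
      ∀ k', j ≤ k' → k' ≤ m → avg c j k' = rvcAux m c j → k' ≤ k := by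
  classical
  obtain ⟨k0, h1, h2, h3⟩ := rvcAux_mem m c hjm
  set T := (Finset.Icc j m).filter (fun k => avg c j k = rvcAux m c j) with hT
  have hTne : T.Nonempty :=
    ⟨k0, Finset.mem_filter.2 ⟨Finset.mem_Icc.2 ⟨h1, h2⟩, h3.symm⟩⟩
  have hmem := Finset.mem_filter.1 (T.max'_mem hTne)
  have hmem1 := Finset.mem_Icc.1 hmem.1
  refine ⟨T.max' hTne, hmem1.1, hmem1.2, hmem.2, ?_⟩
  intro k' ha hb hc
  exact Finset.le_max' T k' (Finset.mem_filter.2 ⟨Finset.mem_Icc.2 ⟨ha, hb⟩, hc⟩)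

lemma exists_min_block (m : ℕ) (c : ℕ → ℝ) {i : ℕ} (hi : 0 < i) :
    ∃ j, 1 ≤ j ∧ j ≤ i ∧ rvc m c j = rvc m c i ∧
      ∀ l, 1 ≤ l → l ≤ i → rvc m c l = rvc m c i → j ≤ l := by
  classical
  set T := (Finset.Icc 1 i).filter (fun l => rvc m c l = rvc m c i) with hT
  have hTne : T.Nonempty :=
    ⟨i, Finset.mem_filter.2 ⟨Finset.mem_Icc.2 ⟨hi, le_refl i⟩, rfl⟩⟩
  have hmem := Finset.mem_filter.1 (T.min'_mem hTne)
  have hmem1 := Finset.mem_Icc.1 hmem.1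
  refine ⟨T.min' hTne, hmem1.1, hmem1.2, hmem.2, ?_⟩
  intro l h1 h2 h3
  exact Finset.min'_le T l (Finset.mem_filter.2 ⟨Finset.mem_Icc.2 ⟨h1, h2⟩, h3⟩)

lemma main (m : ℕ) (c : ℕ → ℝ) :
    ∀ i, i ≤ m →
      ((∑ j ∈ Finset.Ioc 0 i, rvc m c j) ≤ SA c 0 i) ∧
      (0 < i → i < m → rvc m c i < rvc m c (i + 1) →
        (∑ j ∈ Finset.Ioc 0 i, rvc m c j) = SA c 0 i) := by
  intro i
  induction i using Nat.strong_induction_on with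
  | _ i ih =>
  intro him
  rcases Nat.eq_zero_or_pos i with h0 | hipos
  · subst h0; simp [SA]
  -- minimal j in [1, i] with rvc j = rvc i
  obtain ⟨j, hj1, hji, hjeq, hjmin⟩ := exists_min_block m c hipos
  -- φ constant on [j, i]
  have hconst : ∀ l, j ≤ l → l ≤ i → rvc m c l = rvc m c i := by
    intro l hl1 hl2
    have h1 : rvc m c l ≤ rvc m c i := rvc_mono m c (by omega) hl2
    have h2 : rvc m c j ≤ rvc m c l := rvc_mono m c hj1 hl1
    rw [hjeq] at h2
    linarith
  -- strict increase just below j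
  have hjlt : 1 < j → rvc m c (j - 1) < rvc m c j := by
    intro h1j
    have h1 : rvc m c (j - 1) ≤ rvc m c i := rvc_mono m c (by omega) (by omega)
    have h2 : rvc m c (j - 1) ≠ rvc m c i := by
      intro heq
      have := hjmin (j - 1) (by omega) (by omega) heq
      omega
    rw [hjeq]
    exact lt_of_le_of_ne h1 h2
  -- φ i = ψ' j
  have hphi : rvc m c i = rvcAux m c j := by
    obtain ⟨l, hl1, hl2, hle⟩ := rvc_mem m c hj1
    have hlj : l = j := by
      by_contra hne
      have hlj' : l ≤ j - 1 := by omega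
      have h1j : 1 < j := by omega
      have h2 : rvcAux m c l ≤ rvc m c (j - 1) := le_rvc m c hl1 hlj'
      have h3 := hjlt h1j
      rw [hle] at h3
      linarith
    rw [← hjeq, hle, hlj]
  -- the sum ∑_{Ioc (j-1) i} rvc = (i - j + 1) * φ i
  have hcard : ((i - (j - 1) : ℕ) : ℝ) = (i : ℝ) - (j : ℝ) + 1 := by
    have h1 : (j - 1 : ℕ) ≤ i := by omega
    rw [Nat.cast_sub h1, Nat.cast_sub hj1]
    push_cast
    ring
  have hsum : (∑ l ∈ Finset.Ioc (j - 1) i, rvc m c l)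
      = ((i : ℝ) - (j : ℝ) + 1) * rvc m c i := by
    have h1 : (∑ l ∈ Finset.Ioc (j - 1) i, rvc m c l)
        = ∑ _l ∈ Finset.Ioc (j - 1) i, rvc m c i := by
      refine Finset.sum_congr rfl (fun l hl => ?_)
      rw [Finset.mem_Ioc] at hl
      exact hconst l (by omega) hl.2
    rw [h1, Finset.sum_const, Nat.card_Ioc, nsmul_eq_mul, hcard]
  have hGsplit : (∑ l ∈ Finset.Ioc 0 i, rvc m c l)
      = (∑ l ∈ Finset.Ioc 0 (j - 1), rvc m c l) + ∑ l ∈ Finset.Ioc (j - 1) i, rvc m c l :=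
    (Finset.sum_Ioc_consecutive _ (by omega) (by omega)).symm
  have hSsplit : SA c 0 i = SA c 0 (j - 1) + SA c (j - 1) i :=
    (SA_add c (by omega) (by omega)).symm
  -- prefix up to j-1 is tight
  have hGj1 : (∑ l ∈ Finset.Ioc 0 (j - 1), rvc m c l) = SA c 0 (j - 1) := by
    rcases Nat.eq_or_lt_of_le hj1 with h1 | h1
    · rw [← h1]
      simp [SA]
    · have hjm1 : j - 1 < m := by omega
      have hstep : rvc m c (j - 1) < rvc m c ((j - 1) + 1) := by
        have := hjlt h1
        rwa [show j - 1 + 1 = j by omega]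
      exact (ih (j - 1) (by omega) (by omega)).2 (by omega) hjm1 hstep
  -- min inequality: φ i * (i - j + 1) ≤ SA (j-1) i
  have hjm : j ≤ m := by omega
  have hA : rvc m c i * ((i : ℝ) - (j : ℝ) + 1) ≤ SA c (j - 1) i := by
    rw [← le_avg_iff c _ hj1 hji]
    rw [hphi]
    exact rvcAux_le m c hji him
  constructor
  · rw [hGsplit, hSsplit, hGj1, hsum]
    linarith
  · intro _ hiltm hjump
    -- it suffices: SA (j-1) i ≤ φ i * (i - j + 1)
    suffices hB : SA c (j - 1) i ≤ rvc m c i * ((i : ℝ) - (j : ℝ) + 1) by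
      rw [hGsplit, hSsplit, hGj1, hsum]
      linarith
    have hgt : rvc m c i < rvcAux m c (i + 1) := by
      have := jump m c hipos hjump
      linarith [hjump, this.symm.le, this.le]
    obtain ⟨ks, hks1, hks2, hks3, hksmax⟩ := exists_max_argmin m c (j := j) hjm
    have hksA : SA c (j - 1) ks = rvc m c i * ((ks : ℝ) - (j : ℝ) + 1) := by
      have := avg_eq_imp c hj1 hks1 hks3
      rw [← hphi] at this
      exact this
    rcases lt_trichotomy ks i with hlt | heq | hgt'
    · -- ks < i : consider argmin for ks + 1
      have hksi : ks + 1 ≤ i := by omega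
      have hphik : rvc m c (ks + 1) = rvc m c i := hconst (ks + 1) (by omega) hksi
      obtain ⟨k', hk'1, hk'2, hk'3⟩ := rvcAux_mem m c (i := ks + 1) (by omega)
      have hk'le : avg c (ks + 1) k' ≤ rvc m c i := by
        rw [← hk'3, ← hphik]
        exact le_rvc m c (by omega) (le_refl _)
      have hk'A : SA c ks k' ≤ rvc m c i * ((k' : ℝ) - (ks : ℝ)) := by
        have := (avg_le_iff c (rvc m c i) (i := ks + 1) (by omega) hk'1).1 hk'le
        simp only [Nat.add_sub_cancel] at this
        push_cast at this ⊢
        linarith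
      rcases lt_trichotomy k' i with hlt2 | heq2 | hgt2
      · -- k' < i : contradiction with maximality of ks
        exfalso
        have hsplit2 : SA c (j - 1) ks + SA c ks k' = SA c (j - 1) k' :=
          SA_add c (by omega) (by omega)
        have havg : avg c j k' ≤ rvc m c i := by
          rw [avg_le_iff c _ hj1 (by omega)]
          linarith
        have hmin : rvcAux m c j ≤ avg c j k' := rvcAux_le m c (by omega) hk'2
        have heq3 : avg c j k' = rvcAux m c j := le_antisymm (by rw [← hphi]; exact havg) hmin
        have := hksmax k' (by omega) hk'2 heq3
        omega
      · -- k' = i : gives the bound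
        rw [heq2] at hk'A
        have hsplit2 : SA c (j - 1) ks + SA c ks i = SA c (j - 1) i :=
          SA_add c (by omega) (by omega)
        linarith
      · -- k' > i : contradiction with jump
        exfalso
        have hsplit2 : SA c ks i + SA c i k' = SA c ks k' :=
          SA_add c (by omega) (by omega)
        have hsplit3 : SA c (j - 1) ks + SA c ks i = SA c (j - 1) i :=
          SA_add c (by omega) (by omega)
        -- SA ks i ≥ (i - ks) φ
        have h4 : rvc m c i * ((i : ℝ) - (ks : ℝ)) ≤ SA c ks i := by linarith [hA, hksA, hsplit3]
        have h5 : SA c i k' ≤ rvc m c i * ((k' : ℝ) - (i : ℝ)) := by linarith [h4, hk'A, hsplit2]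
        have h6 : rvcAux m c (i + 1) ≤ avg c (i + 1) k' := rvcAux_le m c (by omega) hk'2
        have h7 : avg c (i + 1) k' ≤ rvc m c i := by
          rw [avg_le_iff c _ (by omega) (by omega)]
          simp only [Nat.add_sub_cancel]
          push_cast
          linarith
        linarith
    · -- ks = i
      rw [heq] at hksA
      linarith [hksA]
    · -- ks > i : contradiction with jump
      exfalso
      have hsplit2 : SA c (j - 1) i + SA c i ks = SA c (j - 1) ks :=
        SA_add c (by omega) (by omega)
      have h5 : SA c i ks ≤ rvc m c i * ((ks : ℝ) - (i : ℝ)) := by linarith [hA, hksA, hsplit2]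
      have h6 : rvcAux m c (i + 1) ≤ avg c (i + 1) ks := rvcAux_le m c (by omega) hks2
      have h7 : avg c (i + 1) ks ≤ rvc m c i := by
        rw [avg_le_iff c _ (by omega) (by omega)]
        simp only [Nat.add_sub_cancel]
        push_cast
        linarith
      linarith

end Stmt4Aux

/-- prefix sums of `φ` are at most prefix sums of `ψ`, with
equality whenever `φ_i ≠ φ_{i+1}`. -/
theorem stmt4 (m : ℕ) (hm : 1 ≤ m) (c : ℕ → ℝ) (hc0 : c 0 = 0)
    (hmono : ∀ i j, i ≤ j → j ≤ m → c i ≤ c j)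
    (i : ℕ) (hi : 1 ≤ i) (him : i ≤ m) :
    (∑ j ∈ Finset.Icc 1 i, rvc m c j ≤ ∑ j ∈ Finset.Icc 1 i, vc c j) ∧
      (i < m → rvc m c i ≠ rvc m c (i + 1) →
        ∑ j ∈ Finset.Icc 1 i, rvc m c j = ∑ j ∈ Finset.Icc 1 i, vc c j) := by
  have hIcc : Finset.Icc 1 i = Finset.Ioc 0 i := Stmt4Aux.Icc_eq_Ioc (le_refl 1)
  have hmain := Stmt4Aux.main m c i him
  rw [hIcc]
  constructor
  · exact hmain.1
  · intro h1 h2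
    have hlt : rvc m c i < rvc m c (i + 1) :=
      lt_of_le_of_ne (Stmt4Aux.rvc_mono m c hi (by omega)) h2
    exact hmain.2 hi h1 hlt
end

section
/- For any monotone non-increasing allocation A : {1, ..., n} → [0, 1] (i.e., A_j ≥ A_{j+1} for all j < n), the expected virtual cost under the uniform distribution on the subset is at most that under the uniform distribution on the full set: Σ_{k=1}^{i} A_{p_k}·ψ^i_k ≤ Σ_{j=1}^{n} A_j·ψ_j. -/
open Finset

/-- Abel summation -/
lemma abelsum (f D : ℕ → ℝ) (hf0 : f 0 = 0) (m : ℕ) :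
    ∑ j ∈ Icc 1 m, D j * (f j - f (j-1)) =
      ∑ j ∈ Icc 1 m, (if j < m then D j - D (j+1) else D m) * f j := by
  induction m with
  | zero => simp
  | succ m ih =>
    rw [Finset.sum_Icc_succ_top (by omega), Finset.sum_Icc_succ_top (by omega), ih]
    cases m with
    | zero => simp [hf0]
    | succ m =>
      rw [Finset.sum_Icc_succ_top (by omega), Finset.sum_Icc_succ_top (by omega)]
      have h1 : ∀ j ∈ Icc 1 m, (if j < m+1 then D j - D (j+1) else D (m+1)) * f j
          = (if j < m+1+1 then D j - D (j+1) else D (m+1+1)) * f j := by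
        intro j hj
        simp only [mem_Icc] at hj
        rw [if_pos (by omega), if_pos (by omega)]
      rw [Finset.sum_congr rfl h1]
      simp only [Nat.add_sub_cancel]
      norm_num
      ring

/-- telescoping over Ico -/
lemma telesc (A : ℕ → ℝ) (a b : ℕ) (hab : a ≤ b) :
    ∑ j ∈ Ico a b, (A j - A (j+1)) = A a - A b := by
  induction b with
  | zero =>
    have ha : a = 0 := Nat.le_zero.mp hab
    subst ha; simp
  | succ b ih =>
    rcases Nat.eq_or_lt_of_le hab with h | h
    · subst h; simp
    · have hab' : a ≤ b := by omega
      rw [Finset.sum_Ico_succ_top hab', ih hab']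
      ring

/-- gluing consecutive Ico sums -/
lemma glue (h : ℕ → ℝ) (P : ℕ → ℕ) (m : ℕ) (hP : ∀ k, 1 ≤ k → k ≤ m → P k ≤ P (k+1)) :
    ∑ k ∈ Icc 1 m, ∑ j ∈ Ico (P k) (P (k+1)), h j = ∑ j ∈ Ico (P 1) (P (m+1)), h j := by
  induction m with
  | zero => simp
  | succ m ih =>
    rw [Finset.sum_Icc_succ_top (by omega), ih (fun k hk1 hk2 => hP k hk1 (by omega))]
    have h1 : P 1 ≤ P (m+1) := by
      clear ih
      induction m with
      | zero => exact le_rfl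
      | succ m ih2 =>
        exact le_trans (ih2 (fun k hk1 hk2 => hP k hk1 (by omega))) (hP (m+1) (by omega) (by omega))
    exact Finset.sum_Ico_consecutive h h1 (hP (m+1) (by omega) (by omega))



/-- Virtual cost of the uniform distribution over the subset
`{c (p 1), …, c (p i)}`: `ψ^i_k = k·c_{p_k} − (k−1)·c_{p_{k−1}}`
(the `k = 1` term is `c_{p_1}`). -/
noncomputable def vcSub (c : ℕ → ℝ) (p : ℕ → ℕ) (k : ℕ) : ℝ :=
  (k : ℝ) * c (p k) - ((k : ℝ) - 1) * c (p (k - 1))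

/-- for any monotone non-increasing allocation `A` with values in
`[0,1]`, the expected virtual cost under the uniform distribution on the subset
is at most that under the uniform distribution on the full set. -/
theorem stmt7 (n i : ℕ) (hi : 1 ≤ i) (hin : i ≤ n)
    (c : ℕ → ℝ) (hc0 : c 0 = 0) (hmono : ∀ a b, a ≤ b → b ≤ n → c a ≤ c b)
    (p : ℕ → ℕ) (hp1 : 1 ≤ p 1) (hpn : p i ≤ n)
    (hpmono : ∀ a b, 1 ≤ a → a < b → b ≤ i → p a < p b)
    (A : ℕ → ℝ) (hA : ∀ j, 1 ≤ j → j ≤ n → 0 ≤ A j ∧ A j ≤ 1)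
    (hAmono : ∀ j, 1 ≤ j → j < n → A (j + 1) ≤ A j) :
    ∑ k ∈ Finset.Icc 1 i, A (p k) * vcSub c p k ≤
      ∑ j ∈ Finset.Icc 1 n, A j * vc c j := by
  classical
  have hc_nonneg : ∀ j, j ≤ n → 0 ≤ c j := fun j hj => hc0 ▸ hmono 0 j (Nat.zero_le j) hj
  have hpk : ∀ k, 1 ≤ k → k ≤ i → k ≤ p k := by
    intro k
    induction k with
    | zero => omega
    | succ k ih =>
      intro _ hk
      rcases Nat.eq_zero_or_pos k with rfl | hk1
      · exact hp1
      · have := hpmono k (k+1) hk1 (Nat.lt_succ_self k) hk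
        have := ih hk1 (by omega)
        omega
  have hppmono : ∀ a b, 1 ≤ a → a ≤ b → b ≤ i → p a ≤ p b := by
    intro a b ha hab hb
    rcases eq_or_lt_of_le hab with rfl | h
    · exact le_rfl
    · exact (hpmono a b ha h hb).le
  have hpin : ∀ k, 1 ≤ k → k ≤ i → p k ≤ n := fun k hk1 hk2 =>
    le_trans (hppmono k i hk1 hk2 le_rfl) hpn
  set f : ℕ → ℝ := fun j => (j : ℝ) * c j with hf
  set g : ℕ → ℝ := fun k => (k : ℝ) * c (p k) with hg
  set B : ℕ → ℝ := fun j => if j < n then A j - A (j+1) else A n with hB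
  -- rewrite both sides via Abel summation
  have hL : ∑ k ∈ Finset.Icc 1 i, A (p k) * vcSub c p k =
      ∑ k ∈ Finset.Icc 1 i, (if k < i then A (p k) - A (p (k+1)) else A (p i)) * g k := by
    have h0 := abelsum g (fun k => A (p k)) (by simp [hg]) i
    rw [← h0]
    apply Finset.sum_congr rfl
    intro x hx
    simp only [Finset.mem_Icc] at hx
    simp only [vcSub, hg]
    have hc : ((x - 1 : ℕ) : ℝ) = (x : ℝ) - 1 := by
      have h1 := hx.1; push_cast [Nat.cast_sub h1]; ring
    rw [hc]
  have hR : ∑ j ∈ Finset.Icc 1 n, A j * vc c j = ∑ j ∈ Finset.Icc 1 n, B j * f j := by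
    have h0 := abelsum f A (by simp [hf]) n
    simp only [hB]
    rw [← h0]
    apply Finset.sum_congr rfl
    intro x hx
    simp only [Finset.mem_Icc] at hx
    simp only [vc, hf]
    have hc : ((x - 1 : ℕ) : ℝ) = (x : ℝ) - 1 := by
      have h1 := hx.1; push_cast [Nat.cast_sub h1]; ring
    rw [hc]
  rw [hL, hR]
  set P : ℕ → ℕ := fun k => if k ≤ i then p k else n+1 with hP
  have hPval : ∀ k, k ≤ i → P k = p k := fun k hk => if_pos hk
  have hPtop : ∀ k, i < k → P k = n+1 := fun k hk => if_neg (by omega)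
  have hBnn : ∀ j, 1 ≤ j → j ≤ n → 0 ≤ B j := by
    intro j hj1 hj2
    simp only [hB]
    split
    · have := hAmono j hj1 (by assumption); linarith
    · exact (hA n (by omega) le_rfl).1
  have hPmono : ∀ k, 1 ≤ k → k ≤ i → P k ≤ P (k+1) := by
    intro k hk1 hk2
    rcases eq_or_lt_of_le hk2 with rfl | h
    · rw [hPval k le_rfl, hPtop (k+1) (by omega)]; omega
    · rw [hPval k hk2, hPval (k+1) (by omega)]
      exact (hpmono k (k+1) hk1 (Nat.lt_succ_self k) (by omega)).le
  -- per-k bound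
  have key : ∀ k ∈ Finset.Icc 1 i,
      (if k < i then A (p k) - A (p (k+1)) else A (p i)) * g k ≤
        ∑ j ∈ Finset.Ico (P k) (P (k+1)), B j * f j := by
    intro k hk
    simp only [Finset.mem_Icc] at hk
    obtain ⟨hk1, hk2⟩ := hk
    have hPk : P k = p k := hPval k hk2
    have hpkn : p k ≤ n := hpin k hk1 hk2
    have hkpk : k ≤ p k := hpk k hk1 hk2
    have htel : ∑ j ∈ Finset.Ico (P k) (P (k+1)), B j =
        (if k < i then A (p k) - A (p (k+1)) else A (p i)) := by
      rcases eq_or_lt_of_le hk2 with rfl | hki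
      · rw [if_neg (lt_irrefl k), hPk, hPtop (k+1) (by omega)]
        rw [Finset.sum_Ico_succ_top hpkn]
        have he : ∀ j ∈ Finset.Ico (p k) n, B j = A j - A (j+1) := by
          intro j hj
          simp only [Finset.mem_Ico] at hj
          exact if_pos hj.2
        rw [Finset.sum_congr rfl he, telesc A _ _ hpkn]
        simp only [hB, if_neg (lt_irrefl n)]
        ring
      · have hk1i : k + 1 ≤ i := hki
        rw [if_pos hki, hPk, hPval (k+1) hk1i]
        have hlt : p k < p (k+1) := hpmono k (k+1) hk1 (Nat.lt_succ_self k) hk1i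
        have hpk1n : p (k+1) ≤ n := hpin (k+1) (by omega) hk1i
        have he : ∀ j ∈ Finset.Ico (p k) (p (k+1)), B j = A j - A (j+1) := by
          intro j hj
          simp only [Finset.mem_Ico] at hj
          exact if_pos (by omega)
        rw [Finset.sum_congr rfl he, telesc A _ _ hlt.le]
    rw [← htel, Finset.sum_mul]
    apply Finset.sum_le_sum
    intro j hj
    simp only [Finset.mem_Ico] at hj
    have hjpk : p k ≤ j := hPk ▸ hj.1
    have hjn : j ≤ n := by
      by_cases h : k + 1 ≤ i
      · have h2 : j < p (k+1) := by rw [hPval (k+1) h] at hj; exact hj.2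
        have h3 := hpin (k+1) (by omega) h
        omega
      · have h2 : j < n + 1 := by rw [hPtop (k+1) (by omega)] at hj; exact hj.2
        omega
    have hBj : 0 ≤ B j := hBnn j (by omega) hjn
    apply mul_le_mul_of_nonneg_left _ hBj
    simp only [hg, hf]
    exact mul_le_mul (by exact_mod_cast le_trans hkpk hjpk)
      (hmono (p k) j hjpk hjn) (hc_nonneg (p k) hpkn) (by positivity)
  calc ∑ k ∈ Finset.Icc 1 i, (if k < i then A (p k) - A (p (k+1)) else A (p i)) * g k
      ≤ ∑ k ∈ Finset.Icc 1 i, ∑ j ∈ Finset.Ico (P k) (P (k+1)), B j * f j :=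
        Finset.sum_le_sum key
    _ = ∑ j ∈ Finset.Ico (P 1) (P (i+1)), B j * f j := glue _ P i hPmono
    _ ≤ ∑ j ∈ Finset.Icc 1 n, B j * f j := by
        apply Finset.sum_le_sum_of_subset_of_nonneg
        · intro j hj
          simp only [Finset.mem_Ico] at hj
          rw [hPval 1 hi, hPtop (i+1) (by omega)] at hj
          simp only [Finset.mem_Icc]
          omega
        · intro j hj _
          simp only [Finset.mem_Icc] at hj
          have h1 := hBnn j hj.1 hj.2
          have h2 : 0 ≤ f j := mul_nonneg (by positivity) (hc_nonneg j hj.2)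
          exact mul_nonneg h1 h2
end
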